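/- Let {s,t} and {u,v} be disjoint pairs of distinct indices in {1,…,m}, and let P_{G^{st}} and P_{G^{uv}} denote the marginal distributions on {−1,1}^m of (λ_1,…,λ_m) under the weak supervision Ising models f_{G^{st}} and f_{G^{uv}}. Then the symmetric Kullback–Leibler divergence satisfies S(P_{G^{st}} ‖ P_{G^{uv}}) = D(P_{G^{st}} ‖ P_{G^{uv}}) + D(P_{G^{uv}} ‖ P_{G^{st}}) = 2θ (E_{G^{st}}[λ_s λ_t] − E_{G^{uv}}[λ_s λ_t]) = 2θ (1 − 4(e^{4θ}+3)^{−1} − tanh²(θ)). -/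

import Mathlib

open BigOperators

noncomputable section

/-- The `±1` spin value of a Boolean configuration entry. -/
def pm (b : Bool) : ℝ := if b then 1 else -1

/-- Energy (log unnormalized weight) of a full configuration `σ` of the sources and the latent
label under the graph `G^{st}`: edges `(λ_i, Y)` for all `i` and the single edge `(λ_s, λ_t)`,
all with parameter `θ`. -/
def energy (m : ℕ) (θ : ℝ) (s t : Fin m) (σ : Fin m ⊕ Unit → Bool) : ℝ :=
  θ * ((∑ i : Fin m, pm (σ (Sum.inl i)) * pm (σ (Sum.inr ()))) +
    pm (σ (Sum.inl s)) * pm (σ (Sum.inl t)))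

/-- Partition function of the Ising model `f_{G^{st}}`. -/
def partition (m : ℕ) (θ : ℝ) (s t : Fin m) : ℝ :=
  ∑ σ : Fin m ⊕ Unit → Bool, Real.exp (energy m θ s t σ)

/-- The Ising probability mass function `f_{G^{st}}` on full configurations `{−1,1}^{m+1}`. -/
def isingPMF (m : ℕ) (θ : ℝ) (s t : Fin m) (σ : Fin m ⊕ Unit → Bool) : ℝ :=
  Real.exp (energy m θ s t σ) / partition m θ s t

/-- Marginal distribution `P_{G^{st}}` of the observed sources `(λ_1, …, λ_m)`. -/
def margPMF (m : ℕ) (θ : ℝ) (s t : Fin m) (x : Fin m → Bool) : ℝ :=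
  ∑ y : Bool, isingPMF m θ s t (fun i => Sum.elim x (fun _ => y) i)

/-- Expectation `E_{G^{st}}[λ_a λ_b]`. -/
def isingCorr (m : ℕ) (θ : ℝ) (s t a b : Fin m) : ℝ :=
  ∑ σ : Fin m ⊕ Unit → Bool,
    isingPMF m θ s t σ * (pm (σ (Sum.inl a)) * pm (σ (Sum.inl b)))

/-- Kullback–Leibler divergence between two pmfs on `{−1,1}^m`. -/
def klDiv (m : ℕ) (P Q : (Fin m → Bool) → ℝ) : ℝ :=
  ∑ x : Fin m → Bool, P x * Real.log (P x / Q x)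

lemma pm_mul_self (b : Bool) : pm b * pm b = 1 := by cases b <;> simp [pm]

lemma exp_theta_pm (θ : ℝ) (a b : Bool) :
    Real.exp (θ * (pm a * pm b)) = Real.cosh θ + Real.sinh θ * (pm a * pm b) := by
  have h1 := Real.cosh_add_sinh θ
  have h2 := Real.cosh_sub_sinh θ
  cases a <;> cases b <;> simp [pm] <;> linarith

lemma sum_prod_bool (m : ℕ) (g : Fin m → Bool → ℝ) :
    ∑ x : Fin m → Bool, ∏ i, g i (x i) = ∏ i, (g i true + g i false) := by
  have h : ∀ i : Fin m, g i true + g i false = ∑ b : Bool, g i b := by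
    intro i; simp [Fintype.sum_bool]
  simp_rw [h]
  rw [Finset.prod_univ_sum]
  apply Finset.sum_congr _ (fun _ _ => rfl)
  ext f
  simp [Fintype.mem_piFinset]

lemma key_sum (m : ℕ) (θ : ℝ) (S : Finset (Fin m)) (y : Bool) :
    ∑ x : Fin m → Bool, (∏ i ∈ S, pm (x i)) * ∏ i, Real.exp (θ * (pm (x i) * pm y)) =
      (2 * Real.sinh θ * pm y) ^ S.card * (2 * Real.cosh θ) ^ (m - S.card) := by
  have h1 : ∀ x : Fin m → Bool,
      (∏ i ∈ S, pm (x i)) * ∏ i, Real.exp (θ * (pm (x i) * pm y)) =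
      ∏ i, (if i ∈ S then pm (x i) else 1) * Real.exp (θ * (pm (x i) * pm y)) := by
    intro x
    rw [Finset.prod_mul_distrib]
    congr 1
    rw [Finset.prod_ite_mem, Finset.univ_inter]
  simp_rw [h1]
  rw [sum_prod_bool m (fun i b => (if i ∈ S then pm b else 1) * Real.exp (θ * (pm b * pm y)))]
  have h2 : ∀ i : Fin m,
      (if i ∈ S then pm true else 1) * Real.exp (θ * (pm true * pm y)) +
      (if i ∈ S then pm false else 1) * Real.exp (θ * (pm false * pm y)) =
      if i ∈ S then 2 * Real.sinh θ * pm y else 2 * Real.cosh θ := by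
    intro i
    have h1 := Real.cosh_add_sinh θ
    have h2 := Real.cosh_sub_sinh θ
    by_cases h : i ∈ S <;> cases y <;> simp [h, pm] <;> linarith
  simp_rw [h2]
  rw [Finset.prod_ite, Finset.prod_const, Finset.prod_const]
  congr 2
  · rw [Finset.filter_mem_eq_inter, Finset.univ_inter]
  · rw [Finset.filter_not, Finset.filter_mem_eq_inter, Finset.univ_inter,
      Finset.card_sdiff_of_subset (Finset.subset_univ S)]
    simp

lemma sum_config (m : ℕ) (f : (Fin m ⊕ Unit → Bool) → ℝ) :
    ∑ σ : Fin m ⊕ Unit → Bool, f σ =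
      ∑ x : Fin m → Bool, ∑ y : Bool, f (Sum.elim x fun _ => y) := by
  have : ∑ x : Fin m → Bool, ∑ y : Bool, f (Sum.elim x fun _ => y) =
      ∑ p : (Fin m → Bool) × Bool, f (Sum.elim p.1 fun _ => p.2) := by
    rw [Fintype.sum_prod_type]
  rw [this]
  refine Fintype.sum_equiv ((Equiv.sumArrowEquivProdArrow (Fin m) Unit Bool).trans
    (Equiv.prodCongrRight fun _ => Equiv.funUnique Unit Bool)) f
    (fun p => f (Sum.elim p.1 fun _ => p.2)) (fun σ => ?_)
  congr 1
  ext i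
  cases i with
  | inl i => rfl
  | inr u => rfl

lemma exp_energy (m : ℕ) (θ : ℝ) (s t : Fin m) (x : Fin m → Bool) (y : Bool) :
    Real.exp (energy m θ s t (Sum.elim x fun _ => y)) =
      (Real.cosh θ + Real.sinh θ * (pm (x s) * pm (x t))) *
        ∏ i, Real.exp (θ * (pm (x i) * pm y)) := by
  simp only [energy, Sum.elim_inl, Sum.elim_inr]
  rw [mul_add, Real.exp_add, Finset.mul_sum, Real.exp_sum, exp_theta_pm]
  ring

lemma card_pair' {m : ℕ} {s t : Fin m} (hst : s ≠ t) :
    ({s, t} : Finset (Fin m)).card = 2 := by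
  rw [Finset.card_insert_of_notMem (by simp [hst]), Finset.card_singleton]

lemma partition_eq (m : ℕ) (θ : ℝ) (s t : Fin m) (hst : s ≠ t) :
    partition m θ s t =
      2 * (Real.cosh θ * (2 * Real.cosh θ) ^ m
        + Real.sinh θ * (2 * Real.sinh θ) ^ 2 * (2 * Real.cosh θ) ^ (m - 2)) := by
  rw [partition, sum_config, Finset.sum_comm]
  have hx : ∀ (y : Bool) (x : Fin m → Bool),
      Real.exp (energy m θ s t (Sum.elim x fun _ => y)) =
        Real.cosh θ * ((∏ i ∈ (∅ : Finset (Fin m)), pm (x i)) *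
            ∏ i, Real.exp (θ * (pm (x i) * pm y)))
        + Real.sinh θ * ((∏ i ∈ ({s, t} : Finset (Fin m)), pm (x i)) *
            ∏ i, Real.exp (θ * (pm (x i) * pm y))) := by
    intro y x
    rw [exp_energy, Finset.prod_empty, Finset.prod_pair hst]
    ring
  simp_rw [hx, Finset.sum_add_distrib, ← Finset.mul_sum, key_sum]
  rw [card_pair' hst, Finset.card_empty]
  rw [Fintype.sum_bool]
  simp [pm]
  ring

lemma corr_div (m : ℕ) (θ : ℝ) (s t a b : Fin m) :
    isingCorr m θ s t a b =
      (∑ σ : Fin m ⊕ Unit → Bool,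
        Real.exp (energy m θ s t σ) * (pm (σ (Sum.inl a)) * pm (σ (Sum.inl b)))) /
      partition m θ s t := by
  rw [isingCorr, Finset.sum_div]
  refine Finset.sum_congr rfl fun σ _ => ?_
  rw [isingPMF, div_mul_eq_mul_div]

lemma numer_same (m : ℕ) (θ : ℝ) (s t : Fin m) (hst : s ≠ t) :
    (∑ σ : Fin m ⊕ Unit → Bool,
        Real.exp (energy m θ s t σ) * (pm (σ (Sum.inl s)) * pm (σ (Sum.inl t)))) =
      2 * (Real.cosh θ * (2 * Real.sinh θ) ^ 2 * (2 * Real.cosh θ) ^ (m - 2)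
        + Real.sinh θ * (2 * Real.cosh θ) ^ m) := by
  rw [sum_config, Finset.sum_comm]
  have hx : ∀ (y : Bool) (x : Fin m → Bool),
      Real.exp (energy m θ s t (Sum.elim x fun _ => y)) * (pm (x s) * pm (x t)) =
        Real.cosh θ * ((∏ i ∈ ({s, t} : Finset (Fin m)), pm (x i)) *
            ∏ i, Real.exp (θ * (pm (x i) * pm y)))
        + Real.sinh θ * ((∏ i ∈ (∅ : Finset (Fin m)), pm (x i)) *
            ∏ i, Real.exp (θ * (pm (x i) * pm y))) := by
    intro y x
    rw [exp_energy, Finset.prod_empty, Finset.prod_pair hst]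
    have h1 := pm_mul_self (x s)
    have h2 := pm_mul_self (x t)
    set P := ∏ i, Real.exp (θ * (pm (x i) * pm y))
    linear_combination Real.sinh θ * P * pm (x t) * pm (x t) * h1 +
      Real.sinh θ * P * h2
  simp only [Sum.elim_inl]
  simp_rw [hx, Finset.sum_add_distrib, ← Finset.mul_sum, key_sum]
  rw [card_pair' hst, Finset.card_empty]
  rw [Fintype.sum_bool]
  simp [pm]
  ring

lemma numer_other (m : ℕ) (θ : ℝ) (s t a b : Fin m) (hst : s ≠ t) (hab : a ≠ b)
    (hsa : s ≠ a) (hsb : s ≠ b) (hta : t ≠ a) (htb : t ≠ b) :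
    (∑ σ : Fin m ⊕ Unit → Bool,
        Real.exp (energy m θ s t σ) * (pm (σ (Sum.inl a)) * pm (σ (Sum.inl b)))) =
      2 * (Real.cosh θ * (2 * Real.sinh θ) ^ 2 * (2 * Real.cosh θ) ^ (m - 2)
        + Real.sinh θ * (2 * Real.sinh θ) ^ 4 * (2 * Real.cosh θ) ^ (m - 4)) := by
  rw [sum_config, Finset.sum_comm]
  have hprod4 : ∀ x : Fin m → Bool,
      (∏ i ∈ ({s, t, a, b} : Finset (Fin m)), pm (x i)) =
        pm (x s) * pm (x t) * pm (x a) * pm (x b) := by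
    intro x
    rw [Finset.prod_insert (by simp [hst, hsa, hsb]),
      Finset.prod_insert (by simp [hta, htb]),
      Finset.prod_insert (by simp [hab]), Finset.prod_singleton]
    ring
  have hcard4 : ({s, t, a, b} : Finset (Fin m)).card = 4 := by
    rw [Finset.card_insert_of_notMem (by simp [hst, hsa, hsb]),
      Finset.card_insert_of_notMem (by simp [hta, htb]),
      Finset.card_insert_of_notMem (by simp [hab]), Finset.card_singleton]
  have hx : ∀ (y : Bool) (x : Fin m → Bool),
      Real.exp (energy m θ s t (Sum.elim x fun _ => y)) * (pm (x a) * pm (x b)) =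
        Real.cosh θ * ((∏ i ∈ ({a, b} : Finset (Fin m)), pm (x i)) *
            ∏ i, Real.exp (θ * (pm (x i) * pm y)))
        + Real.sinh θ * ((∏ i ∈ ({s, t, a, b} : Finset (Fin m)), pm (x i)) *
            ∏ i, Real.exp (θ * (pm (x i) * pm y))) := by
    intro y x
    rw [exp_energy, hprod4, Finset.prod_pair hab]
    ring
  simp only [Sum.elim_inl]
  simp_rw [hx, Finset.sum_add_distrib, ← Finset.mul_sum, key_sum]
  rw [card_pair' hab, hcard4]
  rw [Fintype.sum_bool]
  simp [pm]
  ring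

lemma partition_pos (m : ℕ) (θ : ℝ) (s t : Fin m) : 0 < partition m θ s t := by
  rw [partition]
  exact Finset.sum_pos (fun σ _ => Real.exp_pos _) ⟨fun _ => true, Finset.mem_univ _⟩

lemma cosh3_sinh3_pos (θ : ℝ) : 0 < Real.cosh θ ^ 3 + Real.sinh θ ^ 3 := by
  have h1 : 0 < Real.cosh θ + Real.sinh θ := by
    rw [Real.cosh_add_sinh]; exact Real.exp_pos θ
  have h2 : 0 < Real.cosh θ - Real.sinh θ := by
    rw [Real.cosh_sub_sinh]; exact Real.exp_pos (-θ)
  nlinarith [pow_pos h1 3, mul_pos h1 (mul_pos h2 h2)]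

lemma exp_four (θ : ℝ) : Real.exp (4 * θ) = Real.exp θ ^ 4 := by
  rw [show (4:ℝ) * θ = (4:ℕ) * θ by norm_num, Real.exp_nat_mul]

lemma corr_same (m : ℕ) (θ : ℝ) (s t : Fin m) (hst : s ≠ t) :
    isingCorr m θ s t s t = 1 - 4 * (Real.exp (4 * θ) + 3)⁻¹ := by
  have hm2 : 2 ≤ m := by
    have h := Finset.card_le_univ ({s, t} : Finset (Fin m))
    rw [card_pair' hst] at h
    simpa using h
  set c := Real.cosh θ with hcdef
  set sh := Real.sinh θ with hshdef
  have hKm : (2 * c) ^ m = (2 * c) ^ (m - 2) * (2 * c) ^ 2 := by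
    rw [← pow_add, Nat.sub_add_cancel hm2]
  have hQpos : 0 < (2 * c) ^ (m - 2) := pow_pos (by have := Real.cosh_pos θ; linarith) _
  rw [corr_div, numer_same m θ s t hst, partition_eq m θ s t hst, hKm]
  set Q := (2 * c) ^ (m - 2) with hQdef
  have hA : 2 * (c * (2 * sh) ^ 2 * Q + sh * (Q * (2 * c) ^ 2)) =
      (2 * Q) * (4 * c * sh ^ 2 + 4 * c ^ 2 * sh) := by ring
  have hB : 2 * (c * (Q * (2 * c) ^ 2) + sh * (2 * sh) ^ 2 * Q) =
      (2 * Q) * (4 * c ^ 3 + 4 * sh ^ 3) := by ring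
  rw [hA, hB, mul_div_mul_left _ _ (by positivity)]
  have hden : (0:ℝ) < 4 * c ^ 3 + 4 * sh ^ 3 := by
    have := cosh3_sinh3_pos θ; linarith
  rw [div_eq_iff hden.ne']
  have hc : c = (Real.exp θ + (Real.exp θ)⁻¹) / 2 := by
    rw [hcdef, Real.cosh_eq, Real.exp_neg]
  have hsh : sh = (Real.exp θ - (Real.exp θ)⁻¹) / 2 := by
    rw [hshdef, Real.sinh_eq, Real.exp_neg]
  rw [exp_four, hc, hsh]
  have hE := Real.exp_pos θ
  have hE4 : Real.exp θ ^ 4 + 3 ≠ 0 := by positivity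
  field_simp
  ring

lemma corr_other (m : ℕ) (θ : ℝ) (s t a b : Fin m) (hst : s ≠ t) (hab : a ≠ b)
    (hsa : s ≠ a) (hsb : s ≠ b) (hta : t ≠ a) (htb : t ≠ b) :
    isingCorr m θ s t a b = Real.tanh θ ^ 2 := by
  have hm4 : 4 ≤ m := by
    have hcard4 : ({s, t, a, b} : Finset (Fin m)).card = 4 := by
      rw [Finset.card_insert_of_notMem (by simp [hst, hsa, hsb]),
        Finset.card_insert_of_notMem (by simp [hta, htb]),
        Finset.card_insert_of_notMem (by simp [hab]), Finset.card_singleton]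
    have h := Finset.card_le_univ ({s, t, a, b} : Finset (Fin m))
    rw [hcard4] at h
    simpa using h
  set c := Real.cosh θ with hcdef
  set sh := Real.sinh θ with hshdef
  have hcpos : 0 < c := Real.cosh_pos θ
  have hKm : (2 * c) ^ m = (2 * c) ^ (m - 4) * (2 * c) ^ 4 := by
    rw [← pow_add, Nat.sub_add_cancel hm4]
  have hKm2 : (2 * c) ^ (m - 2) = (2 * c) ^ (m - 4) * (2 * c) ^ 2 := by
    rw [← pow_add]
    congr 1
    omega
  rw [corr_div, numer_other m θ s t a b hst hab hsa hsb hta htb,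
    partition_eq m θ s t hst, hKm, hKm2]
  set Q := (2 * c) ^ (m - 4) with hQdef
  have hA : 2 * (c * (2 * sh) ^ 2 * (Q * (2 * c) ^ 2) + sh * (2 * sh) ^ 4 * Q) =
      (2 * Q) * (16 * c ^ 3 * sh ^ 2 + 16 * sh ^ 5) := by ring
  have hB : 2 * (c * (Q * (2 * c) ^ 4) + sh * (2 * sh) ^ 2 * (Q * (2 * c) ^ 2)) =
      (2 * Q) * (16 * c ^ 5 + 16 * c ^ 2 * sh ^ 3) := by ring
  have hQpos : 0 < Q := pow_pos (by positivity) _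
  rw [hA, hB, mul_div_mul_left _ _ (by positivity)]
  have hden : (0:ℝ) < 16 * c ^ 5 + 16 * c ^ 2 * sh ^ 3 := by
    have h1 := cosh3_sinh3_pos θ
    have h2 : 0 < c ^ 2 := by positivity
    nlinarith
  rw [Real.tanh_eq_sinh_div_cosh, div_pow, div_eq_div_iff hden.ne' (by positivity)]
  ring

lemma marg_eq (m : ℕ) (θ : ℝ) (s t : Fin m) (x : Fin m → Bool) :
    margPMF m θ s t x = Real.exp (θ * (pm (x s) * pm (x t))) *
      (∑ y : Bool, ∏ i, Real.exp (θ * (pm (x i) * pm y))) / partition m θ s t := by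
  rw [margPMF]
  simp only [isingPMF]
  rw [← Finset.sum_div]
  congr 1
  rw [Finset.mul_sum]
  refine Finset.sum_congr rfl fun y _ => ?_
  rw [show (fun i => Sum.elim x (fun _ => y) i) = Sum.elim x (fun _ => y) from rfl,
    exp_energy, exp_theta_pm]

lemma W_pos (m : ℕ) (θ : ℝ) (x : Fin m → Bool) :
    (0:ℝ) < ∑ y : Bool, ∏ i, Real.exp (θ * (pm (x i) * pm y)) :=
  Finset.sum_pos (fun y _ => Finset.prod_pos fun i _ => Real.exp_pos _)
    ⟨true, Finset.mem_univ _⟩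

lemma marg_ratio (m : ℕ) (θ : ℝ) (s t u v : Fin m)
    (h : partition m θ s t = partition m θ u v) (x : Fin m → Bool) :
    margPMF m θ s t x / margPMF m θ u v x =
      Real.exp (θ * (pm (x s) * pm (x t)) - θ * (pm (x u) * pm (x v))) := by
  rw [marg_eq, marg_eq, h, Real.exp_sub]
  have hW := W_pos m θ x
  have hZ := partition_pos m θ u v
  field_simp

lemma corr_marg (m : ℕ) (θ : ℝ) (s t a b : Fin m) :
    ∑ x : Fin m → Bool, margPMF m θ s t x * (pm (x a) * pm (x b)) =
      isingCorr m θ s t a b := by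
  rw [isingCorr, sum_config]
  refine Finset.sum_congr rfl fun x _ => ?_
  rw [margPMF, Finset.sum_mul]
  simp only [Sum.elim_inl]

/-- For disjoint pairs `{s,t}` and `{u,v}` of distinct indices, the symmetric
KL divergence between the marginal source distributions of `f_{G^{st}}` and `f_{G^{uv}}`
satisfies
`D(P_{G^{st}}‖P_{G^{uv}}) + D(P_{G^{uv}}‖P_{G^{st}}) = 2θ(E_{G^{st}}[λ_sλ_t] − E_{G^{uv}}[λ_sλ_t])
 = 2θ(1 − 4(e^{4θ}+3)^{−1} − tanh²(θ))`. -/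
theorem symmetric_kl_divergence (m : ℕ) (θ : ℝ) (hθ : 0 < θ)
    (s t u v : Fin m) (hst : s ≠ t) (huv : u ≠ v)
    (hsu : s ≠ u) (hsv : s ≠ v) (htu : t ≠ u) (htv : t ≠ v) :
    klDiv m (margPMF m θ s t) (margPMF m θ u v) +
      klDiv m (margPMF m θ u v) (margPMF m θ s t) =
      2 * θ * (isingCorr m θ s t s t - isingCorr m θ u v s t) ∧
    klDiv m (margPMF m θ s t) (margPMF m θ u v) +
      klDiv m (margPMF m θ u v) (margPMF m θ s t) =
      2 * θ * (1 - 4 * (Real.exp (4 * θ) + 3)⁻¹ - Real.tanh θ ^ 2) := by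
  have hZ : partition m θ s t = partition m θ u v := by
    rw [partition_eq m θ s t hst, partition_eq m θ u v huv]
  have hkey : ∀ x : Fin m → Bool,
      margPMF m θ s t x * Real.log (margPMF m θ s t x / margPMF m θ u v x) +
      margPMF m θ u v x * Real.log (margPMF m θ u v x / margPMF m θ s t x) =
      θ * (margPMF m θ s t x * (pm (x s) * pm (x t))) -
      θ * (margPMF m θ s t x * (pm (x u) * pm (x v))) -
      θ * (margPMF m θ u v x * (pm (x s) * pm (x t))) +
      θ * (margPMF m θ u v x * (pm (x u) * pm (x v))) := by
    intro x
    rw [marg_ratio m θ s t u v hZ x, marg_ratio m θ u v s t hZ.symm x,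
      Real.log_exp, Real.log_exp]
    ring
  have hsum : klDiv m (margPMF m θ s t) (margPMF m θ u v) +
      klDiv m (margPMF m θ u v) (margPMF m θ s t) =
      θ * (isingCorr m θ s t s t - isingCorr m θ s t u v -
        isingCorr m θ u v s t + isingCorr m θ u v u v) := by
    rw [klDiv, klDiv, ← Finset.sum_add_distrib]
    simp_rw [hkey]
    rw [Finset.sum_add_distrib, Finset.sum_sub_distrib, Finset.sum_sub_distrib,
      ← Finset.mul_sum, ← Finset.mul_sum, ← Finset.mul_sum, ← Finset.mul_sum,
      corr_marg, corr_marg, corr_marg, corr_marg]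
    ring
  have hC1 := corr_same m θ s t hst
  have hC4 := corr_same m θ u v huv
  have hC2 := corr_other m θ s t u v hst huv hsu hsv htu htv
  have hC3 := corr_other m θ u v s t huv hst hsu.symm htu.symm hsv.symm htv.symm
  constructor
  · rw [hsum, hC1, hC2, hC3, hC4]
    ring
  · rw [hsum, hC1, hC2, hC3, hC4]
    ring
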